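/- Let A be an n×n complex matrix of index k and let m ≥ 1 be an integer. Then rank(A^{#_m}) = rank(A^k). -/
import Mathlib


open Matrix

/-- `X` is the Moore–Penrose inverse of `A` (four Penrose equations). -/
def MoorePenroseOf {n : ℕ} (A X : Matrix (Fin n) (Fin n) ℂ) : Prop :=
  A * X * A = A ∧ X * A * X = X ∧ (A * X)ᴴ = A * X ∧ (X * A)ᴴ = X * A

/-- Column space of a square complex matrix. -/
noncomputable def colSpace {n : ℕ} (A : Matrix (Fin n) (Fin n) ℂ) : Submodule ℂ (Fin n → ℂ) :=
  LinearMap.range A.mulVecLin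

/-- Null space of a square complex matrix. -/
noncomputable def nullSpace {n : ℕ} (A : Matrix (Fin n) (Fin n) ℂ) : Submodule ℂ (Fin n → ℂ) :=
  LinearMap.ker A.mulVecLin

/-- `k` is the index of `A`: the smallest nonnegative integer with
`rank(A^k) = rank(A^(k+1))`. -/
def HasIndex {n : ℕ} (A : Matrix (Fin n) (Fin n) ℂ) (k : ℕ) : Prop :=
  (A ^ k).rank = (A ^ (k + 1)).rank ∧ ∀ j < k, (A ^ j).rank ≠ (A ^ (j + 1)).rank

/-- `X` is the core-EP inverse of `A` (where `k = Ind(A)`): `XAX = X` and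
`R(X) = R(Xᴴ) = R(A^k)`. -/
def IsCoreEP {n : ℕ} (A X : Matrix (Fin n) (Fin n) ℂ) (k : ℕ) : Prop :=
  X * A * X = X ∧ colSpace X = colSpace (A ^ k) ∧ colSpace Xᴴ = colSpace (A ^ k)

lemma rank_eq_finrank_colSpace {n : ℕ} (A : Matrix (Fin n) (Fin n) ℂ) :
    A.rank = Module.finrank ℂ (colSpace A) := rfl

lemma colSpace_mul {n : ℕ} (A B : Matrix (Fin n) (Fin n) ℂ) :
    colSpace (A * B) = (colSpace B).map A.mulVecLin := by
  rw [colSpace, Matrix.mulVecLin_mul, LinearMap.range_comp]; rfl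

lemma colSpace_mul_le {n : ℕ} (A B : Matrix (Fin n) (Fin n) ℂ) :
    colSpace (A * B) ≤ colSpace A := by
  rintro x ⟨v, rfl⟩
  exact ⟨B.mulVecLin v, by simp [Matrix.mulVecLin_mul]⟩

/-- If the column space of `M` is contained in that of `F`, then `M` factors as `F * N`. -/
lemma exists_factor {n : ℕ} (F M : Matrix (Fin n) (Fin n) ℂ)
    (h : colSpace M ≤ colSpace F) : ∃ N, M = F * N := by
  have hc : ∀ i, ∃ v, F *ᵥ v = M *ᵥ Pi.single i 1 := fun i =>
    h ⟨Pi.single i 1, rfl⟩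
  choose v hv using hc
  refine ⟨Matrix.of (fun r c => v c r), ?_⟩
  ext j i
  have := congrFun (hv i) j
  simp [Matrix.mulVec_single] at this
  rw [← this]
  simp [Matrix.mul_apply, Matrix.mulVec, dotProduct]

/-- `rank(A^{#_m}) = rank(A^k)`. -/
theorem stmt_9 {n k m : ℕ} (hm : 1 ≤ m)
    (A CEP AmDag : Matrix (Fin n) (Fin n) ℂ)
    (hInd : HasIndex A k)
    (hCEP : IsCoreEP A CEP k)
    (hMP : MoorePenroseOf (A ^ m) AmDag) :
    (CEP ^ (m + 1) * A ^ m * (A ^ m * AmDag)).rank = (A ^ k).rank := by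
  obtain ⟨hXAX, hcol, hcolH⟩ := hCEP
  obtain ⟨hMP1, hMP2, hMP3, hMP4⟩ := hMP
  -- column spaces of powers ≥ k all equal colSpace (A^k)
  have hstep : colSpace (A ^ (k + 1)) = colSpace (A ^ k) := by
    have hle : colSpace (A ^ (k + 1)) ≤ colSpace (A ^ k) := by
      rw [pow_succ]; exact colSpace_mul_le _ _
    exact Submodule.eq_of_le_of_finrank_le hle (le_of_eq hInd.1)
  have hpow : ∀ j, k ≤ j → colSpace (A ^ j) = colSpace (A ^ k) := by
    intro j hj
    induction j with
    | zero => simpa using (Nat.le_zero.mp hj) ▸ rfl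
    | succ j ih =>
      rcases Nat.lt_or_ge k (j + 1) with h | h
      · have hkj : k ≤ j := Nat.lt_succ_iff.mp h
        have : colSpace (A ^ (j + 1)) = colSpace (A ^ (k + 1)) := by
          rw [pow_succ', pow_succ', colSpace_mul, colSpace_mul, ih hkj]
        rw [this, hstep]
      · have : k = j + 1 := le_antisymm hj h
        rw [this]
  -- F := A * CEP is idempotent with colSpace = colSpace (A^k)
  set F := A * CEP with hF
  have hFCEP : CEP * F = CEP := by rw [hF, ← mul_assoc]; exact hXAX
  have hFF : F * F = F := by
    rw [hF]
    calc A * CEP * (A * CEP) = A * (CEP * A * CEP) := by simp only [mul_assoc]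
    _ = A * CEP := by rw [hXAX]
  have hcolF : colSpace F = colSpace (A ^ k) := by
    rw [hF, colSpace_mul, hcol, ← colSpace_mul, ← pow_succ', hstep]
  -- F acts as identity on anything with column space inside colSpace (A^k)
  have hFid : ∀ M : Matrix (Fin n) (Fin n) ℂ, colSpace M ≤ colSpace (A ^ k) → F * M = M := by
    intro M hM
    obtain ⟨N, rfl⟩ := exists_factor F M (hcolF ▸ hM)
    rw [← mul_assoc, hFF]
  -- A^j * CEP^j = F for all j ≥ 1
  have hFC : F * CEP = CEP := hFid CEP (le_of_eq hcol)
  have hAC : ∀ j, A ^ (j + 1) * CEP ^ (j + 1) = F := by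
    intro j
    induction j with
    | zero => simp [hF]
    | succ j ih =>
      have e1 : A ^ (j + 2) = A * A ^ (j + 1) := pow_succ' A (j + 1)
      have e2 : CEP ^ (j + 2) = CEP ^ (j + 1) * CEP := pow_succ CEP (j + 1)
      have e3 : A * A ^ (j + 1) * (CEP ^ (j + 1) * CEP) = A * (A ^ (j + 1) * CEP ^ (j + 1)) * CEP := by
        simp only [mul_assoc]
      rw [e1, e2, e3, ih, mul_assoc, hFC]
  -- the key computation, with j := max k m
  set X := CEP ^ (m + 1) * A ^ m * (A ^ m * AmDag) with hX
  set j := max k m with hj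
  have hjm : m ≤ j := le_max_right _ _
  have hjk : k ≤ j := le_max_left _ _
  have hPAj : A ^ m * AmDag * A ^ j = A ^ j := by
    have : A ^ j = A ^ m * A ^ (j - m) := by rw [← pow_add, Nat.add_sub_cancel' hjm]
    rw [this, ← mul_assoc, hMP1]
  have hXAj : X * A ^ j = CEP ^ (m + 1) * A ^ (m + j) := by
    rw [hX, mul_assoc, mul_assoc, hPAj, ← pow_add]
  have hkey : A ^ (m + 1) * (X * A ^ j) = A ^ (m + j) := by
    rw [hXAj, ← mul_assoc]
    have h1 : A ^ (m + 1) * CEP ^ (m + 1) = F := hAC m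
    rw [h1]
    exact hFid (A ^ (m + j)) (le_of_eq (hpow (m + j) (le_trans hjk (Nat.le_add_left j m))))
  -- rank equalities / inequalities
  have hrk : ∀ i, k ≤ i → (A ^ i).rank = (A ^ k).rank := fun i hi => by
    rw [rank_eq_finrank_colSpace, rank_eq_finrank_colSpace, hpow i hi]
  have hrCEP : CEP.rank = (A ^ k).rank := by
    rw [rank_eq_finrank_colSpace, rank_eq_finrank_colSpace, hcol]
  have hlow : (A ^ k).rank ≤ X.rank := by
    calc (A ^ k).rank = (A ^ (m + j)).rank := (hrk (m + j) (le_trans hjk (Nat.le_add_left j m))).symm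
    _ = (A ^ (m + 1) * (X * A ^ j)).rank := by rw [hkey]
    _ ≤ (X * A ^ j).rank := Matrix.rank_mul_le_right _ _
    _ ≤ X.rank := Matrix.rank_mul_le_left _ _
  have hhigh : X.rank ≤ (A ^ k).rank := by
    calc X.rank ≤ (CEP ^ (m + 1)).rank := by
          rw [hX]; exact le_trans (Matrix.rank_mul_le_left _ _) (Matrix.rank_mul_le_left _ _)
    _ ≤ CEP.rank := by rw [pow_succ']; exact Matrix.rank_mul_le_left _ _
    _ = (A ^ k).rank := hrCEP
  exact le_antisymm hhigh hlow
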